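/- Under the two-groups model with f1 non-increasing on [0,1], suppose τ* ∈ (0,1) satisfies lfdr(τ*) = α, and let the oracle procedure be 𝓡* = {i : p_i ≤ τ*}. Then for every fixed t ∈ [0,1], the fixed-threshold procedure 𝓡_t = {i : p_i ≤ t} has regret ρ(t) := E[L_λ(H, 𝓡_t) − L_λ(H, 𝓡*)] = F(τ*) − F(t) − (π0/α)(τ* − t), and ρ(t) ≥ 0 for all t ∈ [0,1]. -/

import Mathlib

open MeasureTheory ProbabilityTheory Filter

noncomputable section

/-- The uniform distribution on `[0,1]` (the null `p`-value distribution). -/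
def uniform01 : Measure ℝ := volume.restrict (Set.Icc 0 1)

/-- `orderStat m p k` is the `k`-th order statistic `p_(k)` of `p_1, …, p_m` (1-indexed),
with the conventions `p_(0) = 0` and `p_(k) = 0` for `k > m`. -/
def orderStat (m : ℕ) (p : Fin m → ℝ) (k : ℕ) : ℝ :=
  if h : 1 ≤ k ∧ k ≤ m then p (Tuple.sort p ⟨k - 1, by omega⟩) else 0

/-- The SL rejection count at level `q`: the largest minimizer over `k ∈ {0, …, m}`
of `p_(k) - q k / m`. -/
def slCount (m : ℕ) (q : ℝ) (p : Fin m → ℝ) : ℕ :=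
  sSup {k | k ≤ m ∧ ∀ j ≤ m,
    orderStat m p k - q * k / m ≤ orderStat m p j - q * j / m}

/-- The SL rejection threshold `τ_q = p_(R_q)`. -/
def slThreshold (m : ℕ) (q : ℝ) (p : Fin m → ℝ) : ℝ :=
  orderStat m p (slCount m q p)

/-- The empirical cdf `F_m` of `p_1, …, p_m`. -/
def ecdf (m : ℕ) (p : Fin m → ℝ) (t : ℝ) : ℝ :=
  ((Finset.univ.filter fun i => p i ≤ t).card : ℝ) / m

/-- The alternative `p`-value distribution, with density `f1` on `[0,1]`. -/
def altMeasure (f1 : ℝ → ℝ) : Measure ℝ :=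
  uniform01.withDensity fun t => ENNReal.ofReal (f1 t)

/-- The two-groups distribution of a pair `(H_i, p_i)`: `H_i ~ Bernoulli(1 - π0)`
(`false` meaning the null holds), `p_i | H_i = false ~ Unif[0,1]`, and
`p_i | H_i = true` has density `f1`. -/
def pairMeasure (π0 : ℝ) (f1 : ℝ → ℝ) : Measure (Bool × ℝ) :=
  ENNReal.ofReal π0 • (Measure.dirac false).prod uniform01
    + ENNReal.ofReal (1 - π0) • (Measure.dirac true).prod (altMeasure f1)

/-- The joint distribution of the i.i.d. pairs `(H_i, p_i)`, `i = 1, …, m`. -/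
def jointMeasure (m : ℕ) (π0 : ℝ) (f1 : ℝ → ℝ) : Measure (Fin m → Bool × ℝ) :=
  Measure.pi fun _ => pairMeasure π0 f1

/-- The `p`-values of an outcome of the two-groups model. -/
def pvals (m : ℕ) (x : Fin m → Bool × ℝ) (i : Fin m) : ℝ := (x i).2

/-- The marginal `p`-value mixture density `f = π0 + (1 - π0) f1`. -/
def mixDensity (π0 : ℝ) (f1 : ℝ → ℝ) (t : ℝ) : ℝ := π0 + (1 - π0) * f1 t

/-- The local false discovery rate `lfdr(t) = π0 / f(t)`. -/
def lfdr (π0 : ℝ) (f1 : ℝ → ℝ) (t : ℝ) : ℝ := π0 / mixDensity π0 f1 t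

/-- The event that, rejecting the `R` hypotheses with the smallest `p`-values,
the last rejection is a false discovery: `R > 0` and `H_(R) = 0`, where `H_(R)` is the
hypothesis indicator paired with the `R`-th smallest `p`-value. -/
def lastRejNull (m : ℕ) (R : ℕ) (x : Fin m → Bool × ℝ) : Prop :=
  ∃ h : 1 ≤ R ∧ R ≤ m,
    (x (Tuple.sort (pvals m x) ⟨R - 1, by omega⟩)).1 = false

/-- The maximum of `g` over a finite set `S`, with the convention that the
maximum over the empty set is `0`. -/
def maxOver {ι : Type*} (S : Finset ι) (g : ι → ℝ) : ℝ :=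
  if h : S.Nonempty then S.sup' h g else 0

/-- The SL rejection set `𝓡_q = {i : p_i ≤ τ_q}`. -/
def rejSet (m : ℕ) (q : ℝ) (p : Fin m → ℝ) : Finset (Fin m) :=
  Finset.univ.filter fun i => p i ≤ slThreshold m q p

/-- The cdf `F(t) = ∫_0^t f(u) du` of the mixture density `f = π0 + (1-π0) f1`. -/
def mixCdf (π0 : ℝ) (f1 : ℝ → ℝ) (t : ℝ) : ℝ :=
  ∫ u in (0:ℝ)..t, mixDensity π0 f1 u

/-- The weighted classification loss `L_λ(H, 𝓡_t) = ((1+λ)V - R)/m` of the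
fixed-threshold procedure `𝓡_t = {i : p_i ≤ t}`. -/
def thrLoss (m : ℕ) (lam t : ℝ) (x : Fin m → Bool × ℝ) : ℝ :=
  ((1 + lam) * ((Finset.univ.filter fun i => (x i).2 ≤ t ∧ (x i).1 = false).card : ℝ)
      - ((Finset.univ.filter fun i => (x i).2 ≤ t).card : ℝ)) / m

instance : IsProbabilityMeasure uniform01 := by
  constructor
  simp [uniform01, Real.volume_Icc]

lemma f1_integrable {f1 : ℝ → ℝ} (hf1int : ∫ t in Set.Icc (0:ℝ) 1, f1 t = 1) :
    IntegrableOn f1 (Set.Icc 0 1) := by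
  by_contra h
  rw [integral_undef h] at hf1int
  norm_num at hf1int

lemma alt_apply {f1 : ℝ → ℝ} (hf1nn : ∀ t, 0 ≤ f1 t)
    (hf1i : IntegrableOn f1 (Set.Icc 0 1)) {s : Set ℝ} (hs : MeasurableSet s) :
    altMeasure f1 s = ENNReal.ofReal (∫ u in s ∩ Set.Icc 0 1, f1 u) := by
  rw [altMeasure, withDensity_apply _ hs, uniform01,
    Measure.restrict_restrict hs,
    ← ofReal_integral_eq_lintegral_ofReal
      (hf1i.mono_set Set.inter_subset_right) (ae_of_all _ fun u => hf1nn u)]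

lemma alt_prob {f1 : ℝ → ℝ} (hf1nn : ∀ t, 0 ≤ f1 t)
    (hf1i : IntegrableOn f1 (Set.Icc 0 1))
    (hf1int : ∫ t in Set.Icc (0:ℝ) 1, f1 t = 1) :
    IsProbabilityMeasure (altMeasure f1) := by
  constructor
  rw [alt_apply hf1nn hf1i MeasurableSet.univ, Set.univ_inter, hf1int]
  norm_num

lemma pair_prob {π0 : ℝ} {f1 : ℝ → ℝ} (hπ0 : 0 ≤ π0) (hπ1 : π0 ≤ 1)
    (hf1nn : ∀ t, 0 ≤ f1 t) (hf1i : IntegrableOn f1 (Set.Icc 0 1))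
    (hf1int : ∫ t in Set.Icc (0:ℝ) 1, f1 t = 1) :
    IsProbabilityMeasure (pairMeasure π0 f1) := by
  haveI := alt_prob hf1nn hf1i hf1int
  constructor
  simp only [pairMeasure, Measure.add_apply, Measure.smul_apply, smul_eq_mul]
  rw [measure_univ, measure_univ, mul_one, mul_one,
    ← ENNReal.ofReal_add hπ0 (by linarith)]
  norm_num

lemma pi_map_eval {β : Type*} [MeasurableSpace β] (μ : Measure β) [IsProbabilityMeasure μ]
    (m : ℕ) (i : Fin m) :
    (Measure.pi fun _ : Fin m => μ).map (fun x => x i) = μ := by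
  ext s hs
  rw [Measure.map_apply (measurable_pi_apply i) hs]
  have : (fun x : Fin m → β => x i) ⁻¹' s
      = Set.pi Set.univ (Function.update (fun _ => Set.univ) i s) := Set.eval_preimage
  rw [this, Measure.pi_pi]
  rw [Finset.prod_eq_single i (fun j _ hj => by simp [Function.update_apply, hj])
    (by simp)]
  simp

def phi (lam s : ℝ) (y : Bool × ℝ) : ℝ :=
  (1 + lam) * (if y.2 ≤ s ∧ y.1 = false then 1 else 0) - (if y.2 ≤ s then 1 else 0)

lemma phi_meas (lam s : ℝ) : Measurable (phi lam s) := by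
  have h1 : MeasurableSet {y : Bool × ℝ | y.2 ≤ s} :=
    measurableSet_le measurable_snd measurable_const
  have h2 : MeasurableSet {y : Bool × ℝ | y.2 ≤ s ∧ y.1 = false} := by
    have : {y : Bool × ℝ | y.2 ≤ s ∧ y.1 = false}
        = {y : Bool × ℝ | y.2 ≤ s} ∩ (Prod.fst ⁻¹' {false}) := by
      ext y; simp [Set.mem_setOf_eq]
    rw [this]
    exact h1.inter (measurable_fst (MeasurableSet.singleton false))
  exact ((measurable_const.mul (measurable_one.ite h2 measurable_const)).sub
    (measurable_one.ite h1 measurable_const))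

lemma phi_bound (lam s : ℝ) (y : Bool × ℝ) : |phi lam s y| ≤ |1 + lam| + 1 := by
  have h0 : (0:ℝ) ≤ |1 + lam| := abs_nonneg _
  unfold phi
  split_ifs with hA hB hB
  · rw [mul_one]
    exact (abs_sub _ _).trans (by rw [abs_one])
  · rw [mul_one, sub_zero]; linarith
  · rw [mul_zero, zero_sub, abs_neg, abs_one]; linarith
  · simp only [mul_zero, sub_zero, abs_zero]; linarith

lemma unif_Iic {s : ℝ} (h0 : 0 ≤ s) (h1 : s ≤ 1) :
    uniform01 (Set.Iic s) = ENNReal.ofReal s := by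
  rw [uniform01, Measure.restrict_apply measurableSet_Iic]
  have : Set.Iic s ∩ Set.Icc 0 1 = Set.Icc 0 s := by
    ext u
    simp only [Set.mem_inter_iff, Set.mem_Iic, Set.mem_Icc]
    constructor
    · rintro ⟨h, h2, h3⟩; exact ⟨h2, h⟩
    · rintro ⟨h2, h⟩; exact ⟨h, h2, le_trans h h1⟩
  rw [this, Real.volume_Icc, sub_zero]

lemma Iic_inter_Icc {s : ℝ} (h1 : s ≤ 1) :
    Set.Iic s ∩ Set.Icc 0 1 = Set.Icc 0 s := by
  ext u
  simp only [Set.mem_inter_iff, Set.mem_Iic, Set.mem_Icc]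
  constructor
  · rintro ⟨h, h2, h3⟩; exact ⟨h2, h⟩
  · rintro ⟨h2, h⟩; exact ⟨h, h2, le_trans h h1⟩

lemma indicator_ite (s : ℝ) (u : ℝ) :
    (Set.Iic s).indicator (1 : ℝ → ℝ) u = if u ≤ s then 1 else 0 := by
  simp [Set.indicator, Set.mem_Iic]

lemma integral_ite_unif {s : ℝ} (h0 : 0 ≤ s) (h1 : s ≤ 1) :
    ∫ u, (if u ≤ s then (1:ℝ) else 0) ∂uniform01 = s := by
  rw [show (fun u => if u ≤ s then (1:ℝ) else 0)
      = (Set.Iic s).indicator (1 : ℝ → ℝ) from funext fun u => (indicator_ite s u).symm]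
  rw [integral_indicator_one measurableSet_Iic, measureReal_def, unif_Iic h0 h1, ENNReal.toReal_ofReal h0]

lemma integral_ite_alt {f1 : ℝ → ℝ} (hf1nn : ∀ t, 0 ≤ f1 t)
    (hf1i : IntegrableOn f1 (Set.Icc 0 1)) {s : ℝ} (h1 : s ≤ 1) :
    ∫ u, (if u ≤ s then (1:ℝ) else 0) ∂(altMeasure f1) = ∫ u in Set.Icc 0 s, f1 u := by
  rw [show (fun u => if u ≤ s then (1:ℝ) else 0)
      = (Set.Iic s).indicator (1 : ℝ → ℝ) from funext fun u => (indicator_ite s u).symm]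
  rw [integral_indicator_one measurableSet_Iic, measureReal_def, alt_apply hf1nn hf1i measurableSet_Iic,
    Iic_inter_Icc h1, ENNReal.toReal_ofReal (integral_nonneg fun u => hf1nn u)]

lemma integrable_bounded {γ : Type*} [MeasurableSpace γ] (μ : Measure γ) [IsFiniteMeasure μ]
    {g : γ → ℝ} (hg : Measurable g) {C : ℝ} (hb : ∀ x, |g x| ≤ C) : Integrable g μ :=
  Integrable.mono' (integrable_const C) hg.aestronglyMeasurable (ae_of_all _ hb)

lemma phi_false (lam s : ℝ) (u : ℝ) :
    phi lam s (false, u) = lam * (if u ≤ s then 1 else 0) := by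
  unfold phi
  by_cases h : u ≤ s <;> simp [h] <;> ring

lemma phi_true (lam s : ℝ) (u : ℝ) :
    phi lam s (true, u) = -(if u ≤ s then 1 else 0) := by
  unfold phi
  by_cases h : u ≤ s <;> simp [h]

lemma integral_phi {π0 : ℝ} {f1 : ℝ → ℝ} (hπ0 : 0 ≤ π0) (hπ1 : π0 ≤ 1)
    (hf1nn : ∀ t, 0 ≤ f1 t) (hf1i : IntegrableOn f1 (Set.Icc 0 1))
    (hf1int : ∫ t in Set.Icc (0:ℝ) 1, f1 t = 1)
    (lam : ℝ) {s : ℝ} (h0 : 0 ≤ s) (h1 : s ≤ 1) :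
    ∫ y, phi lam s y ∂(pairMeasure π0 f1)
      = π0 * (lam * s) - (1 - π0) * ∫ u in Set.Icc 0 s, f1 u := by
  haveI := alt_prob hf1nn hf1i hf1int
  have hmeas := phi_meas lam s
  have hb := phi_bound lam s
  rw [pairMeasure, integral_add_measure
      ((integrable_bounded _ hmeas hb).smul_measure (by simp))
      ((integrable_bounded _ hmeas hb).smul_measure (by simp)),
    integral_smul_measure, integral_smul_measure,
    Measure.dirac_prod, Measure.dirac_prod,
    integral_map measurable_prodMk_left.aemeasurable hmeas.aestronglyMeasurable,
    integral_map measurable_prodMk_left.aemeasurable hmeas.aestronglyMeasurable]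
  simp only [phi_false, phi_true]
  rw [integral_const_mul, integral_ite_unif h0 h1, integral_neg,
    integral_ite_alt hf1nn hf1i h1,
    ENNReal.toReal_ofReal hπ0, ENNReal.toReal_ofReal (by linarith : (0:ℝ) ≤ 1 - π0)]
  simp only [smul_eq_mul]
  ring

lemma thrLoss_eq_sum (m : ℕ) (lam s : ℝ) (x : Fin m → Bool × ℝ) :
    thrLoss m lam s x = (∑ i, phi lam s (x i)) / m := by
  unfold thrLoss phi
  rw [Finset.card_filter, Finset.card_filter]
  push_cast
  rw [Finset.sum_sub_distrib, Finset.mul_sum]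

lemma exp_thrLoss {π0 : ℝ} {f1 : ℝ → ℝ} (hπ0 : 0 ≤ π0) (hπ1 : π0 ≤ 1)
    (hf1m : Measurable f1) (hf1nn : ∀ t, 0 ≤ f1 t)
    (hf1int : ∫ t in Set.Icc (0:ℝ) 1, f1 t = 1)
    (m : ℕ) (hm : 0 < m) (lam : ℝ) {s : ℝ} (h0 : 0 ≤ s) (h1 : s ≤ 1) :
    ∫ x, thrLoss m lam s x ∂(jointMeasure m π0 f1)
      = π0 * (lam * s) - (1 - π0) * ∫ u in Set.Icc 0 s, f1 u := by
  have hf1i := f1_integrable hf1int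
  haveI := pair_prob hπ0 hπ1 hf1nn hf1i hf1int
  have hmeas := phi_meas lam s
  have hb := phi_bound lam s
  have hcoord : ∀ i : Fin m, ∫ x, phi lam s (x i) ∂(jointMeasure m π0 f1)
      = ∫ y, phi lam s y ∂(pairMeasure π0 f1) := by
    intro i
    have h := integral_map (μ := jointMeasure m π0 f1) (φ := fun x => x i)
      (measurable_pi_apply i).aemeasurable hmeas.aestronglyMeasurable
    rw [show (jointMeasure m π0 f1).map (fun x => x i) = pairMeasure π0 f1 from by
      rw [jointMeasure]; exact pi_map_eval _ m i] at h
    exact h.symm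
  have hint : ∀ i : Fin m, Integrable (fun x => phi lam s (x i)) (jointMeasure m π0 f1) := by
    intro i
    haveI : IsProbabilityMeasure (jointMeasure m π0 f1) := by
      rw [jointMeasure]; infer_instance
    exact integrable_bounded _ (hmeas.comp (measurable_pi_apply i)) fun x => hb (x i)
  simp only [thrLoss_eq_sum]
  rw [show (fun x : Fin m → Bool × ℝ => (∑ i, phi lam s (x i)) / m)
      = fun x => (∑ i, phi lam s (x i)) * (m : ℝ)⁻¹ from funext fun x => div_eq_mul_inv _ _]
  rw [integral_mul_const, integral_finset_sum _ fun i _ => hint i]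
  simp only [hcoord]
  rw [Finset.sum_const, Finset.card_univ, Fintype.card_fin, nsmul_eq_mul]
  rw [integral_phi hπ0 hπ1 hf1nn hf1i hf1int lam h0 h1]
  field_simp

lemma thrLoss_integrable {π0 : ℝ} {f1 : ℝ → ℝ} (hπ0 : 0 ≤ π0) (hπ1 : π0 ≤ 1)
    (hf1nn : ∀ t, 0 ≤ f1 t) (hf1int : ∫ t in Set.Icc (0:ℝ) 1, f1 t = 1)
    (m : ℕ) (lam s : ℝ) :
    Integrable (thrLoss m lam s) (jointMeasure m π0 f1) := by
  have hf1i := f1_integrable hf1int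
  haveI := pair_prob hπ0 hπ1 hf1nn hf1i hf1int
  haveI : IsProbabilityMeasure (jointMeasure m π0 f1) := by
    rw [jointMeasure]; infer_instance
  have hmeas := phi_meas lam s
  have hb := phi_bound lam s
  have : Integrable (fun x : Fin m → Bool × ℝ => ∑ i, phi lam s (x i))
      (jointMeasure m π0 f1) :=
    integrable_finset_sum _ fun i _ =>
      integrable_bounded _ (hmeas.comp (measurable_pi_apply i)) fun x => hb (x i)
  have := this.div_const (m : ℝ)
  simpa only [← thrLoss_eq_sum] using this

lemma f1_ii {f1 : ℝ → ℝ} (hf1i : IntegrableOn f1 (Set.Icc 0 1)) {a b : ℝ}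
    (ha : a ∈ Set.Icc (0:ℝ) 1) (hb : b ∈ Set.Icc (0:ℝ) 1) :
    IntervalIntegrable f1 volume a b := by
  apply IntegrableOn.intervalIntegrable
  apply hf1i.mono_set
  intro u hu
  rcases Set.mem_uIcc.mp hu with ⟨h1, h2⟩ | ⟨h1, h2⟩
  · exact ⟨le_trans ha.1 h1, le_trans h2 hb.2⟩
  · exact ⟨le_trans hb.1 h1, le_trans h2 ha.2⟩

lemma mix_ii {π0 : ℝ} {f1 : ℝ → ℝ} (hf1i : IntegrableOn f1 (Set.Icc 0 1)) {a b : ℝ}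
    (ha : a ∈ Set.Icc (0:ℝ) 1) (hb : b ∈ Set.Icc (0:ℝ) 1) :
    IntervalIntegrable (mixDensity π0 f1) volume a b := by
  have := (intervalIntegrable_const (c := π0) (μ := volume) (a := a) (b := b)).add
    ((f1_ii hf1i ha hb).const_mul (1 - π0))
  exact this

lemma mixCdf_eq {π0 : ℝ} {f1 : ℝ → ℝ} (hf1i : IntegrableOn f1 (Set.Icc 0 1))
    {s : ℝ} (h0 : 0 ≤ s) (h1 : s ≤ 1) :
    mixCdf π0 f1 s = π0 * s + (1 - π0) * ∫ u in Set.Icc 0 s, f1 u := by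
  have hs : s ∈ Set.Icc (0:ℝ) 1 := ⟨h0, h1⟩
  have h00 : (0:ℝ) ∈ Set.Icc (0:ℝ) 1 := by norm_num
  rw [mixCdf]
  unfold mixDensity
  rw [intervalIntegral.integral_add intervalIntegrable_const
      ((f1_ii hf1i h00 hs).const_mul (1 - π0)),
    intervalIntegral.integral_const, intervalIntegral.integral_const_mul,
    intervalIntegral.integral_of_le h0, ← integral_Icc_eq_integral_Ioc]
  simp [mul_comm]

/-- Under the two-groups model with `f1` non-increasing on `[0,1]`,
if `τ* ∈ (0,1)` satisfies `lfdr(τ*) = α`, then for every fixed `t ∈ [0,1]` the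
fixed-threshold procedure `𝓡_t = {i : p_i ≤ t}` has regret
`ρ(t) := E[L_λ(H,𝓡_t) - L_λ(H,𝓡_{τ*})] = F(τ*) - F(t) - (π0/α)(τ* - t)`,
and `ρ(t) ≥ 0`. -/
theorem stmt9 (m : ℕ) (hm : 0 < m) (π0 : ℝ) (hπ0 : 0 ≤ π0) (hπ1 : π0 ≤ 1)
    (f1 : ℝ → ℝ) (hf1m : Measurable f1) (hf1nn : ∀ t, 0 ≤ f1 t)
    (hf1int : ∫ t in Set.Icc (0:ℝ) 1, f1 t = 1)
    (hf1mono : AntitoneOn f1 (Set.Icc 0 1))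
    (lam α : ℝ) (hlam : 0 < lam) (hα : α = 1 / (1 + lam))
    (τs : ℝ) (hτs : τs ∈ Set.Ioo (0:ℝ) 1) (hlfdr : lfdr π0 f1 τs = α) :
    ∀ t ∈ Set.Icc (0:ℝ) 1,
      (∫ x, (thrLoss m lam t x - thrLoss m lam τs x) ∂ jointMeasure m π0 f1
          = mixCdf π0 f1 τs - mixCdf π0 f1 t - (π0 / α) * (τs - t)) ∧
      0 ≤ mixCdf π0 f1 τs - mixCdf π0 f1 t - (π0 / α) * (τs - t) := by
  intro t ht
  obtain ⟨ht0, ht1⟩ := ht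
  obtain ⟨hτ0, hτ1⟩ := hτs
  have hf1i := f1_integrable hf1int
  have hτc : τs ∈ Set.Icc (0:ℝ) 1 := ⟨hτ0.le, hτ1.le⟩
  have htc : t ∈ Set.Icc (0:ℝ) 1 := ⟨ht0, ht1⟩
  have h00 : (0:ℝ) ∈ Set.Icc (0:ℝ) 1 := by norm_num
  have hlam1 : (0:ℝ) < 1 + lam := by linarith
  have hα0 : 0 < α := by rw [hα]; positivity
  have hd0 : mixDensity π0 f1 τs ≠ 0 := by
    intro h
    rw [lfdr, h, div_zero] at hlfdr
    exact absurd hlfdr.symm (ne_of_gt hα0)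
  have hπα : π0 / α = mixDensity π0 f1 τs := by
    rw [lfdr] at hlfdr
    field_simp at hlfdr ⊢
    linarith [hlfdr]
  constructor
  · rw [integral_sub (thrLoss_integrable hπ0 hπ1 hf1nn hf1int m lam t)
        (thrLoss_integrable hπ0 hπ1 hf1nn hf1int m lam τs),
      exp_thrLoss hπ0 hπ1 hf1m hf1nn hf1int m hm lam ht0 ht1,
      exp_thrLoss hπ0 hπ1 hf1m hf1nn hf1int m hm lam hτ0.le hτ1.le,
      mixCdf_eq hf1i ht0 ht1, mixCdf_eq hf1i hτ0.le hτ1.le]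
    have hπα' : π0 / α = (1 + lam) * π0 := by
      rw [hα]
      field_simp
    rw [hπα']
    ring
  · rw [hπα]
    set d := mixDensity π0 f1 τs with hd
    have hint_t := mix_ii (π0 := π0) hf1i h00 htc
    have hint_τ := mix_ii (π0 := π0) hf1i h00 hτc
    have hint_tτ := mix_ii (π0 := π0) hf1i htc hτc
    have hsub : mixCdf π0 f1 τs - mixCdf π0 f1 t = ∫ u in t..τs, mixDensity π0 f1 u :=
      intervalIntegral.integral_interval_sub_left hint_τ hint_t
    have hconst : d * (τs - t) = ∫ u in t..τs, d := by
      rw [intervalIntegral.integral_const, smul_eq_mul]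
      ring
    rw [hsub, hconst, ← intervalIntegral.integral_sub hint_tτ intervalIntegrable_const]
    rcases le_total t τs with h | h
    · apply intervalIntegral.integral_nonneg h
      intro u hu
      have hu01 : u ∈ Set.Icc (0:ℝ) 1 := ⟨le_trans ht0 hu.1, le_trans hu.2 hτ1.le⟩
      have hmono := hf1mono hu01 hτc hu.2
      simp only [hd, mixDensity, sub_nonneg]
      nlinarith
    · have h2 : (∫ u in t..τs, (mixDensity π0 f1 u - d))
          = ∫ u in τs..t, (d - mixDensity π0 f1 u) := by
        rw [intervalIntegral.integral_symm, ← intervalIntegral.integral_neg]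
        simp [neg_sub]
      rw [h2]
      apply intervalIntegral.integral_nonneg h
      intro u hu
      have hu01 : u ∈ Set.Icc (0:ℝ) 1 := ⟨le_trans hτ0.le hu.1, le_trans hu.2 ht1⟩
      have hmono := hf1mono hτc hu01 hu.1
      simp only [hd, mixDensity, sub_nonneg]
      nlinarith
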